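/- Let F be a 2-form on a star-shaped region U of Minkowski (or Riemannian) space with dF = 0 and δF = j where δj = 0. Then F = δα + hj for some form α ∈ Λ³(U), where h is the cohomotopy operator; moreover δα is the unique coexact part of F, and the constraint d(δα + hj) = 0 holds. -/
import Mathlib

/-- For the Maxwell system `dF = 0`, `δF = j` with conserved current
(`δj = 0`) on a star-shaped region, where the cohomotopy operator satisfies
`δh + hδ = I`, one has `F = δα + hj` for some form `α`; the coexact part `δα` is
unique, and the constraint `d(δα + hj) = 0` holds. -/
theorem stmt18 {V : Type*} [AddCommGroup V] [Module ℝ V]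
    (d δ h : V →ₗ[ℝ] V) (F j : V)
    (hδ2 : ∀ x, δ (δ x) = 0) (hh2 : ∀ x, h (h x) = 0)
    (hhomotopy : ∀ x, δ (h x) + h (δ x) = x)
    (hF : d F = 0) (hFj : δ F = j) (hj : δ j = 0) :
    ∃ α : V, F = δ α + h j ∧ d (δ α + h j) = 0 ∧
      ∀ α' : V, F = δ α' + h j → δ α' = δ α := by
  have key : δ (h F) + h j = F := by
    have := hhomotopy F
    rw [hFj] at this
    exact this
  refine ⟨h F, key.symm, by rw [key]; exact hF, ?_⟩
  intro α' hα'
  have : δ α' + h j = δ (h F) + h j := by rw [← hα', key]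
  exact add_right_cancel this
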